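/- Let I ⊆ (0,∞) be a nonempty open interval and a, b ∈ ℝ. Define f(x) := x^a if a ≠ 0 and f(x) := log x if a = 0, and g(x) := x^b if b ≠ 0 and g(x) := log x if b = 0. Let n ≥ 2, let λ_1,…,λ_n, μ_1,…,μ_n > 0 and α_1,…,α_n, β_1,…,β_n ∈ ℝ, and define p_i(x) := λ_i x^{α_i} and q_i(x) := μ_i x^{β_i}. If A_{f,p} is locally smaller than A_{g,q}, then there exist γ > 0 and δ ∈ ℝ such that μ_i = γ λ_i and β_i = α_i + δ for all i ∈ {1,…,n}, and a ≤ b + 2δ. -/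

import Mathlib

open Set Function Real Filter

/-- The `n`-variable generalized Bajraktarević mean `A_{f,p}` on the interval `I`:
`A_{f,p}(x) = f⁻¹((∑ pᵢ(xᵢ) f(xᵢ)) / (∑ pᵢ(xᵢ)))`. -/
noncomputable def bajMean {n : ℕ} (I : Set ℝ) (f : ℝ → ℝ) (p : Fin n → ℝ → ℝ)
    (x : Fin n → ℝ) : ℝ :=
  Function.invFunOn f I ((∑ i, p i (x i) * f (x i)) / (∑ i, p i (x i)))

/-- The `i`-th first-order partial derivative of `Φ : Iⁿ → ℝ`. -/
noncomputable def pder {n : ℕ} (Φ : (Fin n → ℝ) → ℝ) (i : Fin n) (y : Fin n → ℝ) : ℝ :=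
  deriv (fun t => Φ (Function.update y i t)) (y i)

/-- The second-order partial derivative `∂ᵢ∂ⱼΦ`. -/
noncomputable def pder2 {n : ℕ} (Φ : (Fin n → ℝ) → ℝ) (i j : Fin n) :
    (Fin n → ℝ) → ℝ :=
  pder (pder Φ j) i

/-- `M` is locally smaller than `N`: there is an open set `U ⊆ Iⁿ` containing the
diagonal of `Iⁿ` on which `M ≤ N`. -/
def LocallySmaller {n : ℕ} (I : Set ℝ) (M N : (Fin n → ℝ) → ℝ) : Prop :=
  ∃ U : Set (Fin n → ℝ), IsOpen U ∧ U ⊆ {x | ∀ i, x i ∈ I} ∧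
    (∀ x ∈ I, (fun _ => x) ∈ U) ∧ ∀ x ∈ U, M x ≤ N x

noncomputable def cc (a : ℝ) : ℝ := if a = 0 then 1 else a

noncomputable def fa (a : ℝ) (t : ℝ) : ℝ := if a = 0 then Real.log t else t ^ a

noncomputable def HH (a b y : ℝ) : ℝ :=
  if a = 0 then (if b = 0 then y else Real.exp (b * y))
  else (if b = 0 then a⁻¹ * Real.log y else y ^ (b / a))

noncomputable def HH1 (a b y : ℝ) : ℝ :=
  if a = 0 then (if b = 0 then 1 else b * Real.exp (b * y))
  else (if b = 0 then (a * y)⁻¹ else (b / a) * y ^ (b / a - 1))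

noncomputable def HH2 (a b y : ℝ) : ℝ :=
  if a = 0 then (if b = 0 then 0 else b * b * Real.exp (b * y))
  else (if b = 0 then -((a * y ^ 2)⁻¹) else (b / a) * ((b / a - 1) * y ^ (b / a - 2)))

lemma cc_ne_zero (a : ℝ) : cc a ≠ 0 := by
  unfold cc; split <;> simp_all

lemma cc_pos_of (a : ℝ) (h : 0 ≤ a) : 0 < cc a := by
  unfold cc; split
  · norm_num
  · cases h.lt_or_eq with
    | inl h => exact h
    | inr h => simp_all

lemma fa_hasDerivAt (a : ℝ) {t : ℝ} (ht : 0 < t) :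
    HasDerivAt (fa a) (cc a * t ^ (a - 1)) t := by
  unfold fa cc
  by_cases ha : a = 0
  · subst ha
    norm_num [Real.rpow_neg_one]
    exact Real.hasDerivAt_log ht.ne'
  · simp only [ha, if_false]
    exact Real.hasDerivAt_rpow_const (Or.inl ht.ne')

lemma fa_pos {a t : ℝ} (ha : a ≠ 0) (ht : 0 < t) : 0 < fa a t := by
  unfold fa; rw [if_neg ha]; exact Real.rpow_pos_of_pos ht a

lemma fa_continuousOn (a : ℝ) : ContinuousOn (fa a) (Set.Ioi 0) := by
  unfold fa
  by_cases ha : a = 0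
  · simp only [ha, if_pos rfl]
    exact Real.continuousOn_log.mono (fun x hx => ne_of_gt hx)
  · simp only [ha, if_false]
    intro t ht
    exact (Real.continuousAt_rpow_const t a (Or.inl (ne_of_gt ht))).continuousWithinAt

lemma HH_fa {a b t : ℝ} (ht : 0 < t) : HH a b (fa a t) = fa b t := by
  by_cases ha : a = 0 <;> by_cases hb : b = 0
  · simp [HH, fa, ha, hb]
  · simp only [HH, fa, ha, hb, if_pos rfl, if_false, if_true]
    rw [Real.rpow_def_of_pos ht, mul_comm]
  · simp only [HH, fa, ha, hb, if_pos rfl, if_false, if_true]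
    rw [Real.log_rpow ht, inv_mul_cancel_left₀ ha]
  · simp only [HH, fa, ha, hb, if_false]
    rw [← Real.rpow_mul ht.le, mul_div_cancel₀ b ha]

lemma HH1_fa {a b t : ℝ} (ht : 0 < t) : HH1 a b (fa a t) = cc b / cc a * t ^ (b - a) := by
  by_cases ha : a = 0 <;> by_cases hb : b = 0
  · simp [HH1, fa, cc, ha, hb, Real.rpow_zero]
  · simp only [HH1, fa, cc, ha, hb, if_pos rfl, if_false, if_true]
    have h : t ^ (b - (0:ℝ)) = rexp (b * log t) := by
      rw [sub_zero, Real.rpow_def_of_pos ht, mul_comm]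
    rw [h]; ring
  · simp only [HH1, fa, cc, ha, hb, if_pos rfl, if_false, if_true]
    have h : t ^ ((0:ℝ) - a) = (t ^ a)⁻¹ := by
      rw [show (0:ℝ) - a = -a by ring, Real.rpow_neg ht.le]
    rw [h, mul_inv]; ring
  · simp only [HH1, fa, cc, ha, hb, if_false]
    rw [← Real.rpow_mul ht.le]
    congr 2
    field_simp

lemma HH2_fa {a b t : ℝ} (ht : 0 < t) :
    HH2 a b (fa a t) = cc b * (b - a) / (cc a) ^ 2 * t ^ (b - 2 * a) := by
  by_cases ha : a = 0 <;> by_cases hb : b = 0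
  · simp [HH2, fa, cc, ha, hb]
  · simp only [HH2, fa, cc, ha, hb, if_pos rfl, if_false, if_true]
    have h : t ^ (b - 2 * (0:ℝ)) = rexp (b * log t) := by
      rw [show b - 2 * (0:ℝ) = b by ring, Real.rpow_def_of_pos ht, mul_comm]
    rw [h]; ring
  · simp only [HH2, fa, cc, ha, hb, if_pos rfl, if_false, if_true]
    have h : t ^ ((0:ℝ) - 2 * a) = (t ^ a * t ^ a)⁻¹ := by
      rw [show (0:ℝ) - 2 * a = -(a + a) by ring, Real.rpow_neg ht.le, Real.rpow_add ht]
    rw [h, sq]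
    have h2 : (0:ℝ) < t ^ a := Real.rpow_pos_of_pos ht a
    field_simp
    ring
  · simp only [HH2, fa, cc, ha, hb, if_false]
    have h : (t ^ a) ^ (b / a - 2) = t ^ (b - 2 * a) := by
      rw [← Real.rpow_mul ht.le]
      congr 1
      field_simp
    rw [h]
    field_simp

lemma HH_hasDerivAt {a b y : ℝ} (hy : a ≠ 0 → 0 < y) :
    HasDerivAt (HH a b) (HH1 a b y) y := by
  by_cases ha : a = 0 <;> by_cases hb : b = 0
  · have h : HH a b = fun y => y := by funext z; simp [HH, ha, hb]
    rw [h]; simp only [HH1, ha, hb, if_pos rfl]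
    exact hasDerivAt_id y
  · have h : HH a b = fun y => rexp (b * y) := by funext z; simp [HH, ha, hb]
    rw [h]; simp only [HH1, ha, hb, if_pos rfl, if_false]
    have := ((hasDerivAt_id y).const_mul b).exp
    refine this.congr_deriv ?_; rw [if_pos trivial]; simp only [id_eq, mul_one]; ring
  · have h : HH a b = fun y => a⁻¹ * Real.log y := by funext z; simp [HH, ha, hb]
    rw [h]; simp only [HH1, ha, hb, if_pos rfl, if_false]
    have := (Real.hasDerivAt_log (hy ha).ne').const_mul a⁻¹
    refine this.congr_deriv ?_; rw [if_pos trivial]; rw [mul_inv]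
  · have h : HH a b = fun y => y ^ (b / a) := by funext z; simp [HH, ha, hb]
    rw [h]; simp only [HH1, ha, hb, if_false]
    exact Real.hasDerivAt_rpow_const (Or.inl (hy ha).ne')

lemma HH1_hasDerivAt {a b y : ℝ} (hy : a ≠ 0 → 0 < y) :
    HasDerivAt (HH1 a b) (HH2 a b y) y := by
  by_cases ha : a = 0 <;> by_cases hb : b = 0
  · have h : HH1 a b = fun _ => (1:ℝ) := by funext z; simp [HH1, ha, hb]
    rw [h]; simp only [HH2, ha, hb, if_pos rfl]
    exact hasDerivAt_const y 1
  · have h : HH1 a b = fun y => b * rexp (b * y) := by funext z; simp [HH1, ha, hb]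
    rw [h]; simp only [HH2, ha, hb, if_pos rfl, if_false]
    have := (((hasDerivAt_id y).const_mul b).exp).const_mul b
    refine this.congr_deriv ?_; rw [if_pos trivial]; simp only [id_eq, mul_one]; ring
  · have h : HH1 a b = fun y => a⁻¹ * y⁻¹ := by
      funext z; simp [HH1, ha, hb, mul_inv, mul_comm]
    rw [h]; simp only [HH2, ha, hb, if_pos rfl, if_false]
    have := (hasDerivAt_inv (hy ha).ne').const_mul a⁻¹
    refine this.congr_deriv ?_; rw [if_pos trivial]; simp only [mul_inv, inv_pow]; ring
  · have h : HH1 a b = fun y => (b / a) * y ^ (b / a - 1) := by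
      funext z; simp [HH1, ha, hb]
    rw [h]; simp only [HH2, ha, hb, if_false]
    have := (Real.hasDerivAt_rpow_const (p := b / a - 1)
      (Or.inl (hy ha).ne')).const_mul (b / a)
    refine this.congr_deriv ?_; rw [show b / a - 1 - 1 = b / a - 2 by ring]

lemma fa_mono {b u v : ℝ} (hu : 0 < u) (huv : u ≤ v) :
    0 ≤ cc b * (fa b v - fa b u) := by
  have hv : 0 < v := hu.trans_le huv
  have hlog : Real.log u ≤ Real.log v := Real.log_le_log hu huv
  by_cases hb : b = 0
  · norm_num [fa, cc, hb]
    linarith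
  · simp only [fa, cc, hb, if_false]
    rw [Real.rpow_def_of_pos hu, Real.rpow_def_of_pos hv]
    rcases lt_trichotomy b 0 with h | h | h
    · have : Real.log v * b ≤ Real.log u * b := by nlinarith
      have := Real.exp_le_exp.mpr this
      nlinarith
    · exact absurd h hb
    · have : Real.log u * b ≤ Real.log v * b := by nlinarith
      have := Real.exp_le_exp.mpr this
      nlinarith

lemma localmin_second {u u1 : ℝ → ℝ} {x D : ℝ}
    (h0 : u x = 0) (hnn : ∀ᶠ t in nhds x, 0 ≤ u t)
    (hd : ∀ᶠ t in nhds x, HasDerivAt u (u1 t) t)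
    (hd2 : HasDerivAt u1 D x) : u1 x = 0 ∧ 0 ≤ D := by
  have hmin : IsLocalMin u x := by
    filter_upwards [hnn] with t ht
    rw [h0]; exact ht
  have hdx : HasDerivAt u (u1 x) x := hd.self_of_nhds
  have h1 : u1 x = 0 := by
    rw [← hdx.deriv]; exact hmin.deriv_eq_zero
  refine ⟨h1, ?_⟩
  by_contra hD
  push_neg at hD
  -- u1 is eventually negative on the right of x
  have hslope : Tendsto (slope u1 x) (nhdsWithin x {x}ᶜ) (nhds D) :=
    hasDerivAt_iff_tendsto_slope.mp hd2
  have hneg : ∀ᶠ t in nhdsWithin x (Set.Ioi x), u1 t < 0 := by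
    have h2 : ∀ᶠ t in nhdsWithin x {x}ᶜ, slope u1 x t < 0 :=
      hslope.eventually_lt_const hD
    have h3 : nhdsWithin x (Set.Ioi x) ≤ nhdsWithin x {x}ᶜ :=
      nhdsWithin_mono x (fun t ht => ne_of_gt ht)
    filter_upwards [h3 h2, self_mem_nhdsWithin] with t ht ht2
    have hx : 0 < t - x := sub_pos.mpr ht2
    have hs : slope u1 x t = (u1 t - u1 x) / (t - x) := by
      simp [slope_def_field]
    rw [hs, h1, sub_zero] at ht
    rcases div_neg_iff.mp ht with h | h
    · linarith [h.2]
    · exact h.1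
  rw [eventually_nhdsWithin_iff] at hneg
  obtain ⟨e1, he1, H1⟩ := Metric.eventually_nhds_iff.mp hneg
  obtain ⟨e2, he2, H2⟩ := Metric.eventually_nhds_iff.mp hnn
  obtain ⟨e3, he3, H3⟩ := Metric.eventually_nhds_iff.mp hd
  set m := min e1 (min e2 e3) with hm_def
  have hm : 0 < m := lt_min he1 (lt_min he2 he3)
  set e := m / 2 with he_def
  have hepos : 0 < e := by positivity
  have hdist : ∀ t ∈ Set.Icc x (x + e), dist t x < m := by
    intro t ht
    rw [Real.dist_eq, abs_lt]
    constructor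
    · linarith [ht.1]
    · have := ht.2; simp only [he_def] at this ⊢; linarith
  have hd1 : ∀ t ∈ Set.Icc x (x + e), dist t x < e1 := fun t ht =>
    lt_of_lt_of_le (hdist t ht) (min_le_left _ _)
  have hd2' : ∀ t ∈ Set.Icc x (x + e), dist t x < e2 := fun t ht =>
    lt_of_lt_of_le (hdist t ht) ((min_le_right _ _).trans (min_le_left _ _))
  have hd3 : ∀ t ∈ Set.Icc x (x + e), dist t x < e3 := fun t ht =>
    lt_of_lt_of_le (hdist t ht) ((min_le_right _ _).trans (min_le_right _ _))
  have hanti : StrictAntiOn u (Set.Icc x (x + e)) := by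
    apply strictAntiOn_of_deriv_neg (convex_Icc _ _)
    · exact fun t ht => (H3 (hd3 t ht)).continuousAt.continuousWithinAt
    · intro t ht
      rw [interior_Icc] at ht
      rw [(H3 (hd3 t ⟨ht.1.le, ht.2.le⟩)).deriv]
      exact H1 (hd1 t ⟨ht.1.le, ht.2.le⟩) ht.1
  have hlt : u (x + e) < u x :=
    hanti (Set.left_mem_Icc.mpr (by linarith)) (Set.right_mem_Icc.mpr (by linarith))
      (by linarith)
  have hge : 0 ≤ u (x + e) := H2 (hd2' (x + e) (Set.right_mem_Icc.mpr (by linarith)))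
  rw [h0] at hlt
  linarith

noncomputable def SS (a P0 lm al x t : ℝ) : ℝ :=
  (P0 * fa a x + lm * t ^ al * fa a t) / (P0 + lm * t ^ al)

noncomputable def SS1 (a P0 lm al x t : ℝ) : ℝ :=
  ((lm * (al * t ^ (al - 1)) * fa a t + lm * t ^ al * (cc a * t ^ (a - 1)))
      * (P0 + lm * t ^ al)
    - (P0 * fa a x + lm * t ^ al * fa a t) * (lm * (al * t ^ (al - 1))))
    / (P0 + lm * t ^ al) ^ 2

lemma den_pos {P0 lm al t : ℝ} (hP0 : 0 < P0) (hlm : 0 < lm) (ht : 0 < t) :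
    0 < P0 + lm * t ^ al := by positivity

lemma cmul_rpow_hasDerivAt (c e : ℝ) {x : ℝ} (hx : 0 < x) :
    HasDerivAt (fun t : ℝ => c * t ^ e) (c * (e * x ^ (e - 1))) x :=
  (Real.hasDerivAt_rpow_const (Or.inl hx.ne')).const_mul c

lemma cmul_rpow_hasDerivAt2 (c e : ℝ) {x : ℝ} (hx : 0 < x) :
    HasDerivAt (fun t : ℝ => c * (e * t ^ (e - 1))) (c * (e * ((e - 1) * x ^ (e - 2)))) x := by
  have h := ((Real.hasDerivAt_rpow_const (p := e - 1) (Or.inl hx.ne')).const_mul e).const_mul c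
  have h2 : e - 1 - 1 = e - 2 := by ring
  rw [h2] at h
  exact h

lemma SS_hasDerivAt {a P0 lm al x t : ℝ} (hP0 : 0 < P0) (hlm : 0 < lm) (ht : 0 < t) :
    HasDerivAt (SS a P0 lm al x) (SS1 a P0 lm al x t) t := by
  have hp := cmul_rpow_hasDerivAt lm al ht
  have hf := fa_hasDerivAt a ht
  have hnum := (hp.mul hf).const_add (P0 * fa a x)
  have hden := hp.const_add P0
  have hd := hnum.div hden (den_pos hP0 hlm ht (al := al)).ne'
  exact hd

lemma SS_eval {a P0 lm al x : ℝ} (hP0 : 0 < P0) (hlm : 0 < lm) (hx : 0 < x) :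
    SS a P0 lm al x x = fa a x := by
  unfold SS
  have h := (den_pos hP0 hlm hx (al := al)).ne'
  field_simp

lemma SS1_eval {a P0 lm al x : ℝ} (hP0 : 0 < P0) (hlm : 0 < lm) (hx : 0 < x) :
    SS1 a P0 lm al x x = (lm * x ^ al / (P0 + lm * x ^ al)) * (cc a * x ^ (a - 1)) := by
  unfold SS1
  have h := (den_pos hP0 hlm hx (al := al)).ne'
  field_simp
  ring

lemma SS_pos {a P0 lm al x t : ℝ} (ha : a ≠ 0) (hP0 : 0 < P0) (hlm : 0 < lm)
    (hx : 0 < x) (ht : 0 < t) : 0 < SS a P0 lm al x t := by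
  unfold SS
  have h1 := fa_pos ha hx
  have h2 := fa_pos ha ht
  have h3 : (0:ℝ) < t ^ al := Real.rpow_pos_of_pos ht al
  positivity

lemma rpow_eq {x : ℝ} (hx : x ≠ 0) (e f : ℝ) (h : e = f + 1) :
    x ^ e = x ^ f * x := by
  rw [h, Real.rpow_add_one hx]

lemma SS_hasDerivAt2 {a P0 lm al x : ℝ} (hP0 : 0 < P0) (hlm : 0 < lm) (hx : 0 < x) :
    HasDerivAt (SS1 a P0 lm al x)
      (2 * (lm * (al * x ^ (al - 1)) / (P0 + lm * x ^ al)) * (cc a * x ^ (a - 1))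
          * (1 - lm * x ^ al / (P0 + lm * x ^ al))
        + (lm * x ^ al / (P0 + lm * x ^ al)) * (cc a * ((a - 1) * x ^ (a - 2)))) x := by
  have hp := cmul_rpow_hasDerivAt lm al hx
  have hp1 := cmul_rpow_hasDerivAt2 lm al hx
  have hf := fa_hasDerivAt a hx
  have hf1 : HasDerivAt (fun t : ℝ => cc a * t ^ (a - 1)) (cc a * ((a - 1) * x ^ (a - 2))) x := by
    have h := cmul_rpow_hasDerivAt (cc a) (a - 1) hx
    have h2 : a - 1 - 1 = a - 2 := by ring
    rw [h2] at h
    exact h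
  have hNum1 := (hp1.mul hf).add (hp.mul hf1)
  have hNum := (hp.mul hf).const_add (P0 * fa a x)
  have hDen := hp.const_add P0
  have hDen2 := hDen.pow 2
  have hDne : (P0 + lm * x ^ al) ^ 2 ≠ 0 := by
    have := den_pos hP0 hlm hx (al := al); positivity
  have hbig := ((hNum1.mul hDen).sub (hNum.mul hp1)).div hDen2 hDne
  refine hbig.congr_deriv ?_
  symm
  simp only [Pi.pow_apply, Pi.mul_apply, Pi.add_apply, Pi.sub_apply]
  have hx' := hx.ne'
  rw [rpow_eq hx' al (al - 1) (by ring), rpow_eq hx' (al - 1) (al - 2) (by ring),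
    rpow_eq hx' (a - 1) (a - 2) (by ring)]
  have hQ : (0:ℝ) < x ^ (al - 2) := Real.rpow_pos_of_pos hx _
  have hDne' : P0 + lm * (x ^ (al - 2) * x * x) ≠ 0 := by positivity
  field_simp
  ring

set_option maxHeartbeats 2000000 in
lemma core {a b al be lm m P0 Q0 x : ℝ} (hP0 : 0 < P0) (hQ0 : 0 < Q0)
    (hlm : 0 < lm) (hm : 0 < m) (hx : 0 < x)
    (hu : ∀ᶠ t in nhds x,
      0 ≤ cc b * (SS b Q0 m be x t - HH a b (SS a P0 lm al x t))) :
    lm * x ^ al * (Q0 + m * x ^ be) = m * x ^ be * (P0 + lm * x ^ al) ∧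
      0 ≤ 2 * (be - al) + b - a := by
  have hxne := hx.ne'
  have hPd := den_pos hP0 hlm hx (al := al)
  have hQd := den_pos hQ0 hm hx (al := be)
  have hgt : ∀ᶠ t in nhds x, 0 < t := eventually_gt_nhds hx
  -- the function and its first derivative
  set u : ℝ → ℝ := fun t => cc b * (SS b Q0 m be x t - HH a b (SS a P0 lm al x t)) with hu_def
  set u1 : ℝ → ℝ := fun t =>
    cc b * (SS1 b Q0 m be x t - HH1 a b (SS a P0 lm al x t) * SS1 a P0 lm al x t) with hu1_def
  have h0 : u x = 0 := by
    simp only [hu_def, SS_eval hP0 hlm hx, SS_eval hQ0 hm hx, HH_fa hx, sub_self, mul_zero]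
  have hd : ∀ᶠ t in nhds x, HasDerivAt u (u1 t) t := by
    filter_upwards [hgt] with t ht
    have hSf := SS_hasDerivAt hP0 hlm ht (a := a) (x := x) (al := al)
    have hSg := SS_hasDerivAt hQ0 hm ht (a := b) (x := x) (al := be)
    have hH : HasDerivAt (HH a b) (HH1 a b (SS a P0 lm al x t)) (SS a P0 lm al x t) :=
      HH_hasDerivAt (fun ha => SS_pos ha hP0 hlm hx ht)
    exact (hSg.sub (hH.comp t hSf)).const_mul (cc b)
  -- second derivative at x
  have hSf1x := SS_hasDerivAt hP0 hlm hx (a := a) (x := x) (al := al)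
  have hH1c : HasDerivAt (fun t => HH1 a b (SS a P0 lm al x t))
      (HH2 a b (SS a P0 lm al x x) * SS1 a P0 lm al x x) x :=
    (HH1_hasDerivAt (fun ha => SS_pos ha hP0 hlm hx hx)).comp x hSf1x
  have hSf2 := SS_hasDerivAt2 hP0 hlm hx (a := a) (al := al)
  have hSg2 := SS_hasDerivAt2 hQ0 hm hx (a := b) (lm := m) (al := be)
  have hd2 := (hSg2.sub (hH1c.mul hSf2)).const_mul (cc b)
  obtain ⟨h1, hD⟩ := localmin_second h0 hu hd hd2
  have hca := cc_ne_zero a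
  have hcb := cc_ne_zero b
  have hb1 : (0:ℝ) < x ^ (b - 1) := Real.rpow_pos_of_pos hx _
  have hcol : x ^ (b - a) * x ^ (a - 1) = x ^ (b - 1) := by
    rw [← Real.rpow_add hx]; congr 1; ring
  -- first-order condition
  simp only [hu1_def, SS_eval hP0 hlm hx, SS1_eval hP0 hlm hx, SS1_eval hQ0 hm hx,
    HH1_fa hx] at h1
  have e1 : m * x ^ be / (Q0 + m * x ^ be) * (cc b * x ^ (b - 1)) =
      cc b / cc a * x ^ (b - a) *
        (lm * x ^ al / (P0 + lm * x ^ al) * (cc a * x ^ (a - 1))) := by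
    rcases mul_eq_zero.mp h1 with h | h
    · exact absurd h hcb
    · exact sub_eq_zero.mp h
  have e2 : cc b / cc a * x ^ (b - a) *
      (lm * x ^ al / (P0 + lm * x ^ al) * (cc a * x ^ (a - 1))) =
      lm * x ^ al / (P0 + lm * x ^ al) * (cc b * x ^ (b - 1)) := by
    rw [← hcol]; field_simp
  have e3div : m * x ^ be / (Q0 + m * x ^ be) = lm * x ^ al / (P0 + lm * x ^ al) := by
    have := e1.trans e2
    exact mul_right_cancel₀ (mul_ne_zero hcb hb1.ne') this
  have e3 : m * x ^ be * (P0 + lm * x ^ al) = lm * x ^ al * (Q0 + m * x ^ be) := by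
    rw [div_eq_div_iff hQd.ne' hPd.ne'] at e3div
    linarith
  refine ⟨by linarith, ?_⟩
  -- second-order condition
  simp only [SS_eval hP0 hlm hx, SS1_eval hP0 hlm hx, HH1_fa hx, HH2_fa hx] at hD
  have hq1 : m * (be * x ^ (be - 1)) / (Q0 + m * x ^ be) =
      be * (lm * x ^ al / (P0 + lm * x ^ al)) * x⁻¹ := by
    rw [← e3div, rpow_eq hxne be (be - 1) (by ring)]
    field_simp
  rw [hq1, e3div] at hD
  set W : ℝ := lm * x ^ al / (P0 + lm * x ^ al) with hW_def
  have hWpos : 0 < W := by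
    have : (0:ℝ) < lm * x ^ al := by positivity
    exact div_pos this hPd
  have hWlt : W < 1 := by
    rw [hW_def, div_lt_one hPd]
    linarith
  have hb2 : (0:ℝ) < x ^ (b - 2) := Real.rpow_pos_of_pos hx _
  have hcb2 : (0:ℝ) < cc b ^ 2 :=
    lt_of_le_of_ne (sq_nonneg _) (Ne.symm (pow_ne_zero 2 hcb))
  have hK : (0:ℝ) < cc b ^ 2 * x ^ (b - 2) * (W * (1 - W)) := by
    have h1' : (0:ℝ) < W * (1 - W) := mul_pos hWpos (by linarith)
    positivity
  have hD2 : 0 ≤ cc b ^ 2 * x ^ (b - 2) * (W * (1 - W)) * (2 * (be - al) + b - a) := by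
    convert hD using 1
    have c5 : x ^ (b - a) = x ^ (b - 2) * (x ^ (a - 2))⁻¹ := by
      rw [show b - a = b - 2 + -(a - 2) by ring, Real.rpow_add hx, Real.rpow_neg hx.le]
    have c6 : x ^ (b - 2 * a) =
        x ^ (b - 2) * (x ^ (a - 2))⁻¹ * (x ^ (a - 2))⁻¹ * x⁻¹ * x⁻¹ := by
      rw [show b - 2 * a = b - 2 + -(a - 2) + -(a - 2) + -1 + -1 by ring,
        Real.rpow_add hx, Real.rpow_add hx, Real.rpow_add hx, Real.rpow_add hx,
        Real.rpow_neg hx.le (a - 2), Real.rpow_neg_one]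
    have ha2 : (0:ℝ) < x ^ (a - 2) := Real.rpow_pos_of_pos hx _
    rw [hW_def, c5, c6, rpow_eq hxne (b - 1) (b - 2) (by ring),
      rpow_eq hxne (a - 1) (a - 2) (by ring), rpow_eq hxne al (al - 1) (by ring)]
    have hPd' : P0 + lm * (x ^ (al - 1) * x) ≠ 0 := by
      have : (0:ℝ) < x ^ (al - 1) := Real.rpow_pos_of_pos hx _
      positivity
    field_simp
    ring
  by_contra hc
  push_neg at hc
  nlinarith [mul_pos hK (by linarith : (0:ℝ) < -(2 * (be - al) + b - a))]

lemma mean_eval {n : ℕ} {I : Set ℝ} (hIconn : I.OrdConnected) (hIpos : I ⊆ Set.Ioi (0:ℝ))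
    (a : ℝ) (lam al : Fin n → ℝ) (hlam : ∀ k, 0 < lam k) (i : Fin n) {x t : ℝ}
    (hxI : x ∈ I) (htI : t ∈ I)
    (hP0 : 0 < ∑ k ∈ ({i}ᶜ : Finset (Fin n)), lam k * x ^ al k) :
    bajMean I (fa a) (fun k s => lam k * s ^ al k) (Function.update (fun _ => x) i t) ∈ I ∧
    fa a (bajMean I (fa a) (fun k s => lam k * s ^ al k) (Function.update (fun _ => x) i t))
      = SS a (∑ k ∈ ({i}ᶜ : Finset (Fin n)), lam k * x ^ al k) (lam i) (al i) x t := by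
  classical
  have hx : 0 < x := hIpos hxI
  have ht : 0 < t := hIpos htI
  set P0 := ∑ k ∈ ({i}ᶜ : Finset (Fin n)), lam k * x ^ al k with hP0_def
  set y : Fin n → ℝ := Function.update (fun _ => x) i t with hy_def
  have hyi : y i = t := by simp [hy_def]
  have hyk : ∀ k ∈ ({i}ᶜ : Finset (Fin n)), y k = x := by
    intro k hk
    have : k ≠ i := by simpa using hk
    simp [hy_def, Function.update_of_ne this]
  have hsum1 : (∑ k, (lam k * (y k) ^ al k) * fa a (y k))
      = lam i * t ^ al i * fa a t + P0 * fa a x := by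
    rw [Fintype.sum_eq_add_sum_compl i, hyi, hP0_def, Finset.sum_mul]
    congr 1
    exact Finset.sum_congr rfl (fun k hk => by rw [hyk k hk])
  have hsum2 : (∑ k, lam k * (y k) ^ al k) = lam i * t ^ al i + P0 := by
    rw [Fintype.sum_eq_add_sum_compl i, hyi, hP0_def]
    congr 1
    exact Finset.sum_congr rfl (fun k hk => by rw [hyk k hk])
  have harg : (∑ k, (lam k * (y k) ^ al k) * fa a (y k)) / (∑ k, lam k * (y k) ^ al k)
      = SS a P0 (lam i) (al i) x t := by
    rw [hsum1, hsum2]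
    unfold SS
    rw [add_comm (lam i * t ^ al i) P0, add_comm (lam i * t ^ al i * fa a t) (P0 * fa a x)]
  -- the value of SS is attained by fa a on I
  have hlt : 0 < lam i * t ^ al i := mul_pos (hlam i) (Real.rpow_pos_of_pos ht _)
  have hDD : 0 < P0 + lam i * t ^ al i := add_pos hP0 hlt
  have hmem : SS a P0 (lam i) (al i) x t ∈ Set.uIcc (fa a x) (fa a t) := by
    have hlb : min (fa a x) (fa a t) ≤ SS a P0 (lam i) (al i) x t := by
      unfold SS
      rw [le_div_iff₀ hDD]
      rcases min_le_iff.mp (le_refl (min (fa a x) (fa a t))) with _ | _ <;>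
        nlinarith [min_le_left (fa a x) (fa a t), min_le_right (fa a x) (fa a t)]
    have hub : SS a P0 (lam i) (al i) x t ≤ max (fa a x) (fa a t) := by
      unfold SS
      rw [div_le_iff₀ hDD]
      nlinarith [le_max_left (fa a x) (fa a t), le_max_right (fa a x) (fa a t)]
    rw [Set.uIcc_eq_union]
    rcases le_total (fa a x) (fa a t) with h | h
    · left; exact ⟨by rwa [min_eq_left h] at hlb, by rwa [max_eq_right h] at hub⟩
    · right; exact ⟨by rwa [min_eq_right h] at hlb, by rwa [max_eq_left h] at hub⟩
  have hseg : Set.uIcc x t ⊆ I := hIconn.uIcc_subset hxI htI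
  have hcontOn : ContinuousOn (fa a) (Set.uIcc x t) :=
    (fa_continuousOn a).mono (fun s hs => hIpos (hseg hs))
  obtain ⟨s, hs, hfs⟩ := intermediate_value_uIcc hcontOn hmem
  have hex : ∃ s ∈ I, fa a s = SS a P0 (lam i) (al i) x t := ⟨s, hseg hs, hfs⟩
  constructor
  · show Function.invFunOn (fa a) I _ ∈ I
    rw [harg]
    exact Function.invFunOn_mem hex
  · show fa a (Function.invFunOn (fa a) I _) = _
    rw [harg]
    exact Function.invFunOn_eq hex


set_option maxHeartbeats 1000000 in
/-- Corollary LCpp, necessity: with `f(x) = x^a` (`f = log` if `a = 0`),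
`g(x) = x^b` (`g = log` if `b = 0`) and power weights `pᵢ(x) = λᵢ x^{αᵢ}`,
`qᵢ(x) = μᵢ x^{βᵢ}` on `I ⊆ (0,∞)`, if `A_{f,p}` is locally smaller than `A_{g,q}`,
then there exist `γ > 0` and `δ ∈ ℝ` such that `μᵢ = γλᵢ`, `βᵢ = αᵢ + δ` for all `i`,
and `a ≤ b + 2δ`. -/
theorem stmt11 {n : ℕ} (hn : 2 ≤ n) (I : Set ℝ) (hIopen : IsOpen I)
    (hIconn : I.OrdConnected) (hIne : I.Nonempty) (hIpos : I ⊆ Set.Ioi (0 : ℝ))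
    (a b : ℝ)
    (lam mu : Fin n → ℝ) (al be : Fin n → ℝ)
    (hlam : ∀ i, 0 < lam i) (hmu : ∀ i, 0 < mu i)
    (hloc : LocallySmaller I
      (bajMean I (fun x => if a = 0 then Real.log x else x ^ a)
        (fun i x => lam i * x ^ al i))
      (bajMean I (fun x => if b = 0 then Real.log x else x ^ b)
        (fun i x => mu i * x ^ be i))) :
    ∃ γ : ℝ, 0 < γ ∧ ∃ δ : ℝ,
      (∀ i : Fin n, mu i = γ * lam i ∧ be i = al i + δ) ∧ a ≤ b + 2 * δ := by
  classical
  obtain ⟨U, hUopen, hUsub, hUdiag, hUle⟩ := hloc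
  have key : ∀ x ∈ I, ∀ i : Fin n,
      lam i * x ^ al i * ((∑ k ∈ ({i}ᶜ : Finset (Fin n)), mu k * x ^ be k) + mu i * x ^ be i) =
      mu i * x ^ be i * ((∑ k ∈ ({i}ᶜ : Finset (Fin n)), lam k * x ^ al k) + lam i * x ^ al i) ∧
      0 ≤ 2 * (be i - al i) + b - a := by
    intro x hxI i
    have hx : 0 < x := hIpos hxI
    have hcompl : ({i}ᶜ : Finset (Fin n)).Nonempty := by
      rw [← Finset.card_pos, Finset.card_compl, Finset.card_singleton]
      simp only [Fintype.card_fin]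
      omega
    have hP0 : 0 < ∑ k ∈ ({i}ᶜ : Finset (Fin n)), lam k * x ^ al k :=
      Finset.sum_pos (fun k _ => mul_pos (hlam k) (Real.rpow_pos_of_pos hx _)) hcompl
    have hQ0 : 0 < ∑ k ∈ ({i}ᶜ : Finset (Fin n)), mu k * x ^ be k :=
      Finset.sum_pos (fun k _ => mul_pos (hmu k) (Real.rpow_pos_of_pos hx _)) hcompl
    refine core hP0 hQ0 (hlam i) (hmu i) hx ?_
    -- eventual inequality near x
    have hy_cont : Continuous (fun t : ℝ => Function.update (fun _ : Fin n => x) i t) := by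
      apply continuous_pi
      intro k
      by_cases hk : k = i
      · subst hk
        simp only [Function.update_self]
        exact continuous_id
      · simp only [Function.update_of_ne hk]
        exact continuous_const
    have hyxU : Function.update (fun _ : Fin n => x) i x ∈ U := by
      have h : Function.update (fun _ : Fin n => x) i x = fun _ => x := by
        funext k
        simp [Function.update_apply]
      rw [h]
      exact hUdiag x hxI
    have hevU : ∀ᶠ t in nhds x, Function.update (fun _ : Fin n => x) i t ∈ U :=
      hy_cont.continuousAt.eventually_mem (hUopen.mem_nhds hyxU)
    have hevI : ∀ᶠ t in nhds x, t ∈ I := hIopen.eventually_mem hxI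
    filter_upwards [hevU, hevI] with t htU htI
    obtain ⟨hmI, hmv⟩ := mean_eval hIconn hIpos a lam al hlam i hxI htI hP0
    obtain ⟨hnI, hnv⟩ := mean_eval hIconn hIpos b mu be hmu i hxI htI hQ0
    have hle : bajMean I (fa a) (fun k s => lam k * s ^ al k)
        (Function.update (fun _ => x) i t) ≤
        bajMean I (fa b) (fun k s => mu k * s ^ be k)
        (Function.update (fun _ => x) i t) := hUle _ htU
    have h5 := fa_mono (b := b) (hIpos hmI) hle
    rw [← hmv, ← hnv, HH_fa (hIpos hmI)]
    exact h5
  -- two distinct points of I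
  obtain ⟨x0, hx0I⟩ := hIne
  obtain ⟨ε, hε, hball⟩ := Metric.isOpen_iff.mp hIopen x0 hx0I
  have hy0I : x0 + ε / 2 ∈ I := by
    apply hball
    rw [Metric.mem_ball, Real.dist_eq, abs_of_nonneg (by linarith)]
    linarith
  set y0 : ℝ := x0 + ε / 2 with hy0_def
  have hne0 : y0 ≠ x0 := by rw [hy0_def]; intro h; linarith [congrArg (· - x0) h]
  have hx0 : 0 < x0 := hIpos hx0I
  have hy0 : 0 < y0 := hIpos hy0I
  set i0 : Fin n := ⟨0, by omega⟩
  haveI : Nonempty (Fin n) := ⟨i0⟩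
  -- cross relation at any z in I
  have hfullmu : ∀ (z : ℝ) (i : Fin n),
      (∑ k ∈ ({i}ᶜ : Finset (Fin n)), mu k * z ^ be k) + mu i * z ^ be i
        = ∑ k, mu k * z ^ be k := by
    intro z i
    rw [Fintype.sum_eq_add_sum_compl i]
    ring
  have hfulllam : ∀ (z : ℝ) (i : Fin n),
      (∑ k ∈ ({i}ᶜ : Finset (Fin n)), lam k * z ^ al k) + lam i * z ^ al i
        = ∑ k, lam k * z ^ al k := by
    intro z i
    rw [Fintype.sum_eq_add_sum_compl i]
    ring
  have hcross : ∀ z ∈ I, ∀ i : Fin n,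
      lam i * mu i0 * z ^ (al i + be i0) = mu i * lam i0 * z ^ (be i + al i0) := by
    intro z hzI i
    have hz : 0 < z := hIpos hzI
    have h1 := (key z hzI i).1
    have h2 := (key z hzI i0).1
    rw [hfullmu z i, hfulllam z i] at h1
    rw [hfullmu z i0, hfulllam z i0] at h2
    have hQpos : 0 < ∑ k, mu k * z ^ be k :=
      Finset.sum_pos (fun k _ => mul_pos (hmu k) (Real.rpow_pos_of_pos hz _))
        Finset.univ_nonempty
    rw [Real.rpow_add hz, Real.rpow_add hz]
    apply mul_left_cancel₀ hQpos.ne'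
    linear_combination (mu i0 * z ^ be i0) * h1 - (mu i * z ^ be i) * h2
  have hexp : ∀ i : Fin n, al i + be i0 = be i + al i0 := by
    intro i
    have e1 := hcross x0 hx0I i
    have e2 := hcross y0 hy0I i
    have hc : (0:ℝ) < lam i * mu i0 := mul_pos (hlam i) (hmu i0)
    have hd : (0:ℝ) < mu i * lam i0 := mul_pos (hmu i) (hlam i0)
    have l1 := congrArg Real.log e1
    have l2 := congrArg Real.log e2
    rw [Real.log_mul hc.ne' (Real.rpow_pos_of_pos hx0 _).ne',
      Real.log_mul hd.ne' (Real.rpow_pos_of_pos hx0 _).ne',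
      Real.log_rpow hx0, Real.log_rpow hx0] at l1
    rw [Real.log_mul hc.ne' (Real.rpow_pos_of_pos hy0 _).ne',
      Real.log_mul hd.ne' (Real.rpow_pos_of_pos hy0 _).ne',
      Real.log_rpow hy0, Real.log_rpow hy0] at l2
    have hlogne : Real.log y0 - Real.log x0 ≠ 0 := by
      intro h
      apply hne0
      exact Real.log_injOn_pos (Set.mem_Ioi.mpr hy0) (Set.mem_Ioi.mpr hx0)
        (by linarith)
    have := mul_right_cancel₀ hlogne
      (show (al i + be i0) * (Real.log y0 - Real.log x0)
          = (be i + al i0) * (Real.log y0 - Real.log x0) by linear_combination l2 - l1)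
    linarith [this]
  have hcoef : ∀ i : Fin n, lam i * mu i0 = mu i * lam i0 := by
    intro i
    have e1 := hcross x0 hx0I i
    rw [hexp i] at e1
    exact mul_right_cancel₀ (Real.rpow_pos_of_pos hx0 _).ne' e1
  refine ⟨mu i0 / lam i0, div_pos (hmu i0) (hlam i0), be i0 - al i0, fun i => ⟨?_, ?_⟩, ?_⟩
  · have := hcoef i
    rw [div_mul_eq_mul_div, eq_div_iff (hlam i0).ne']
    linear_combination -this
  · have := hexp i
    linarith
  · have := (key x0 hx0I i0).2
    linarith
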